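/- arXiv:2108.06260 — 5 statements merged into one kernel-verified Lean document; each statement's English description precedes it below -/
import Mathlib

section
/- For all real x and nonnegative integers n, the degenerate Bell polynomial satisfies Bel_{n,λ}(x) = e^{-x} · ∑_{k=0}^{∞} (k)_{n,λ} x^k / k!, where (k)_{n,λ} = k(k-λ)(k-2λ)⋯(k-(n-1)λ) is the degenerate falling factorial. -/
open Finset

/-- Degenerate falling factorial `(x)_{n,λ} = x(x-λ)⋯(x-(n-1)λ)`. -/
noncomputable def degFall (lam x : ℝ) (n : ℕ) : ℝ := ∏ i ∈ Finset.range n, (x - i * lam)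

/-- Ordinary falling factorial `(x)_k = x(x-1)⋯(x-k+1)`. -/
noncomputable def fall (x : ℝ) (k : ℕ) : ℝ := ∏ i ∈ Finset.range k, (x - i)

lemma fall_nat_cast (k j : ℕ) : fall (k : ℝ) j = (k.descFactorial j : ℝ) := by
  induction j with
  | zero => simp [fall]
  | succ j ih =>
    rw [fall, Finset.prod_range_succ, ← fall, ih, Nat.descFactorial_succ, Nat.cast_mul]
    rcases le_or_gt j k with h | h
    · rw [Nat.cast_sub h]; ring
    · rw [Nat.descFactorial_of_lt h]; simp

lemma key_eq (x : ℝ) (j k : ℕ) :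
    fall (k : ℝ) j * x ^ k / (Nat.factorial k) =
      if j ≤ k then x ^ k / (Nat.factorial (k - j)) else 0 := by
  rw [fall_nat_cast]
  split_ifs with h
  · have h1 := Nat.factorial_mul_descFactorial h
    have h2 : ((k - j).factorial : ℝ) * (k.descFactorial j : ℝ) = (k.factorial : ℝ) := by
      exact_mod_cast congrArg (Nat.cast (R := ℝ)) h1
    have hk : (k.factorial : ℝ) ≠ 0 := Nat.cast_ne_zero.mpr (Nat.factorial_ne_zero k)
    have hkj : ((k - j).factorial : ℝ) ≠ 0 := Nat.cast_ne_zero.mpr (Nat.factorial_ne_zero _)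
    field_simp
    linear_combination x ^ k * h2
  · rw [Nat.descFactorial_of_lt (not_le.mp h)]; simp

lemma key_summable (x : ℝ) (j : ℕ) :
    Summable (fun k : ℕ => fall (k : ℝ) j * x ^ k / (Nat.factorial k)) := by
  simp only [key_eq]
  rw [← summable_nat_add_iff j]
  have : (fun k : ℕ => if j ≤ k + j then x ^ (k + j) / (Nat.factorial (k + j - j)) else 0)
      = fun k : ℕ => x ^ j * (x ^ k / (Nat.factorial k)) := by
    funext k
    rw [if_pos (Nat.le_add_left j k), Nat.add_sub_cancel, pow_add]
    ring
  rw [this]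
  exact (Real.summable_pow_div_factorial x).mul_left _

lemma key_tsum (x : ℝ) (j : ℕ) :
    ∑' k : ℕ, fall (k : ℝ) j * x ^ k / (Nat.factorial k) = x ^ j * Real.exp x := by
  have hs := key_summable x j
  rw [← Summable.sum_add_tsum_nat_add (f := fun k : ℕ => fall (k : ℝ) j * x ^ k / (Nat.factorial k)) j hs]
  have h0 : ∑ i ∈ range j, fall (i : ℝ) j * x ^ i / (Nat.factorial i) = 0 := by
    apply Finset.sum_eq_zero
    intro i hi
    rw [key_eq, if_neg (by simpa using Finset.mem_range.mp hi)]
  rw [h0, zero_add]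
  have : (fun k : ℕ => fall ((k + j : ℕ) : ℝ) j * x ^ (k + j) / (Nat.factorial (k + j)))
      = fun k : ℕ => x ^ j * (x ^ k / (Nat.factorial k)) := by
    funext k
    rw [key_eq, if_pos (Nat.le_add_left j k), Nat.add_sub_cancel, pow_add]
    ring
  rw [this, tsum_mul_left]
  congr 1
  rw [Real.exp_eq_exp_ℝ, NormedSpace.exp_eq_tsum_div]

/-- with `Bel_{n,λ}(x) = ∑_{k=0}^n S_{2,λ}(n,k) x^k`, one has
`Bel_{n,λ}(x) = e^{-x} ∑_{k=0}^∞ (k)_{n,λ} x^k / k!`. -/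
theorem degenerate_bell_dobinski (lam : ℝ) (S2 : ℕ → ℕ → ℝ)
    (hS2 : ∀ (n : ℕ) (x : ℝ), degFall lam x n = ∑ k ∈ range (n + 1), S2 n k * fall x k)
    (n : ℕ) (x : ℝ) :
    ∑ k ∈ range (n + 1), S2 n k * x ^ k =
      Real.exp (-x) * ∑' k : ℕ, degFall lam (k : ℝ) n * x ^ k / (Nat.factorial k) := by
  have heq : (fun k : ℕ => degFall lam (k : ℝ) n * x ^ k / (Nat.factorial k))
      = fun k : ℕ => ∑ j ∈ range (n + 1),
          S2 n j * (fall (k : ℝ) j * x ^ k / (Nat.factorial k)) := by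
    funext k
    rw [hS2 n (k : ℝ), Finset.sum_mul, Finset.sum_div]
    apply Finset.sum_congr rfl
    intro j _
    ring
  rw [heq, Summable.tsum_finsetSum (fun j _ => ((key_summable x j).mul_left (S2 n j)))]
  have : ∀ j ∈ range (n + 1),
      ∑' k : ℕ, S2 n j * (fall (k : ℝ) j * x ^ k / (Nat.factorial k))
        = S2 n j * (x ^ j * Real.exp x) := by
    intro j _
    rw [tsum_mul_left, key_tsum]
  rw [Finset.sum_congr rfl this, Finset.mul_sum]
  apply Finset.sum_congr rfl
  intro j _
  rw [Real.exp_neg]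
  have hx : Real.exp x ≠ 0 := Real.exp_ne_zero x
  field_simp
end

section
/- For every nonnegative integer n and nonzero constant a, the n-th derivative of t ↦ exp(a·e_λ(t)) equals t ↦ (1+λt)^{-n} · Bel_{n,λ}(a·e_λ(t)) · exp(a·e_λ(t)), where e_λ(t) = (1+λt)^{1/λ}. -/
open Finset

/-- Degenerate Bell polynomial `Bel_{n,λ}(x) = e^{-x} ∑_{k≥0} (k)_{n,λ} x^k / k!`. -/
noncomputable def Bel (lam x : ℝ) (n : ℕ) : ℝ :=
  Real.exp (-x) * ∑' k : ℕ, degFall lam (k : ℝ) n * x ^ k / (Nat.factorial k)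

/-- Degenerate exponential `e_λ(t) = (1+λt)^{1/λ}`. -/
noncomputable def degExp (lam t : ℝ) : ℝ := (1 + lam * t) ^ (1 / lam)



lemma myExp_tsum (x : ℝ) : Real.exp x = ∑' k : ℕ, x ^ k / (Nat.factorial k) := by
  rw [Real.exp_eq_exp_ℝ, NormedSpace.exp_eq_tsum_div]

lemma degFall_zero (lam x : ℝ) : degFall lam x 0 = 1 := by simp [degFall]

lemma degFall_succ (lam x : ℝ) (n : ℕ) :
    degFall lam x (n + 1) = degFall lam x n * (x - n * lam) := by
  simp [degFall, Finset.prod_range_succ]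

lemma abs_degFall_le (lam c : ℝ) (n k : ℕ) (hc : n * |lam| ≤ c) :
    |degFall lam k n| ≤ ((k : ℝ) + c) ^ n := by
  have hc0 : 0 ≤ c := le_trans (by positivity) hc
  rw [degFall, Finset.abs_prod]
  calc ∏ i ∈ Finset.range n, |(k : ℝ) - i * lam|
      ≤ ∏ i ∈ Finset.range n, ((k : ℝ) + c) := by
        apply Finset.prod_le_prod (fun i _ => abs_nonneg _)
        intro i hi
        have hi' : (i : ℝ) ≤ n := by exact_mod_cast (Finset.mem_range.mp hi).le
        have : |(k : ℝ) - i * lam| ≤ (k : ℝ) + i * |lam| := by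
          calc |(k : ℝ) - i * lam| ≤ |(k : ℝ)| + |(i : ℝ) * lam| := abs_sub _ _
          _ = (k : ℝ) + i * |lam| := by rw [abs_of_nonneg (by positivity), abs_mul, Nat.abs_cast]
        refine this.trans ?_
        have : (i : ℝ) * |lam| ≤ n * |lam| := by
          apply mul_le_mul_of_nonneg_right hi' (abs_nonneg _)
        linarith [this.trans hc]
    _ = ((k : ℝ) + c) ^ n := by rw [Finset.prod_const, Finset.card_range]

lemma summable_aux (n : ℕ) (c M : ℝ) (hc : 1 ≤ c) (hM : 0 ≤ M) :
    Summable (fun k : ℕ => ((k : ℝ) + c) ^ n * M ^ k / (Nat.factorial k)) := by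
  apply summable_of_ratio_norm_eventually_le (r := 1/2) (by norm_num)
  have hK : ∃ K : ℕ, 2 ^ n * M * 2 ≤ K + 1 := ⟨⌈2 ^ n * M * 2⌉₊, by
    calc 2 ^ n * M * 2 ≤ ⌈2 ^ n * M * 2⌉₊ := Nat.le_ceil _
    _ ≤ _ := by push_cast; linarith⟩
  obtain ⟨K, hK⟩ := hK
  filter_upwards [Filter.eventually_ge_atTop K] with k hk
  have hkc : (0:ℝ) < k + c := by positivity
  have h1 : ((k : ℝ) + 1 + c) ≤ 2 * ((k : ℝ) + c) := by
    have : (1:ℝ) ≤ (k : ℝ) + c := by linarith [Nat.cast_nonneg (α := ℝ) k]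
    linarith
  have h2 : ((k : ℝ) + 1 + c) ^ n ≤ 2 ^ n * ((k : ℝ) + c) ^ n := by
    calc ((k : ℝ) + 1 + c) ^ n ≤ (2 * ((k : ℝ) + c)) ^ n :=
          pow_le_pow_left₀ (by positivity) h1 n
    _ = 2 ^ n * ((k : ℝ) + c) ^ n := mul_pow _ _ _
  have hfact : (Nat.factorial (k+1) : ℝ) = (k + 1) * Nat.factorial k := by
    push_cast [Nat.factorial_succ]; ring
  rw [Real.norm_eq_abs, Real.norm_eq_abs, abs_of_nonneg (by positivity),
    abs_of_nonneg (by positivity)]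
  have hk1 : (0:ℝ) < (k:ℝ) + 1 := by positivity
  rw [div_le_iff₀ (by positivity)]
  push_cast
  rw [hfact]
  have key : ((k : ℝ) + 1 + c) ^ n * M ≤ 1/2 * (((k:ℝ)+c)^n * ((k:ℝ)+1)) := by
    have hM2 : 2 ^ n * M * 2 ≤ (k:ℝ) + 1 := by
      have : (K:ℝ) ≤ k := by exact_mod_cast hk
      linarith
    calc ((k : ℝ) + 1 + c) ^ n * M ≤ 2 ^ n * ((k : ℝ) + c) ^ n * M :=
          mul_le_mul_of_nonneg_right h2 hM
    _ ≤ 1/2 * (((k:ℝ)+c)^n * ((k:ℝ)+1)) := by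
        have hcn : (0:ℝ) ≤ ((k:ℝ)+c)^n := by positivity
        nlinarith [mul_le_mul_of_nonneg_left hM2 hcn]
  calc ((k : ℝ) + 1 + c) ^ n * M ^ (k+1) = ((k : ℝ) + 1 + c) ^ n * M * M ^ k := by ring
  _ ≤ 1/2 * (((k:ℝ)+c)^n * ((k:ℝ)+1)) * M ^ k := by
      apply mul_le_mul_of_nonneg_right key (by positivity)
  _ = 1/2 * (((k:ℝ)+c)^n * M ^ k / (Nat.factorial k)) * (((k:ℝ)+1) * (Nat.factorial k)) := by
      field_simp



lemma summable_main (lam : ℝ) (n j : ℕ) (M : ℝ) (hM : 0 ≤ M) :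
    Summable (fun k : ℕ => |degFall lam (k : ℝ) n| * (k : ℝ) ^ j * M ^ k / (Nat.factorial k)) := by
  set c : ℝ := n * |lam| + 1 with hc
  have hc0 : (0:ℝ) ≤ (n:ℝ) * |lam| := by positivity
  have hc1 : (1:ℝ) ≤ c := by rw [hc]; linarith
  apply Summable.of_nonneg_of_le (fun k => by positivity)
    (f := fun k : ℕ => ((k:ℝ) + c) ^ (n + j) * M ^ k / (Nat.factorial k))
  · intro k
    rw [pow_add]
    gcongr
    · exact abs_degFall_le lam c n k (by rw [hc]; linarith)
    · linarith [Nat.cast_nonneg (α := ℝ) k]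
  · exact summable_aux (n + j) c M hc1 hM

lemma term_abs (lam a y : ℝ) (hy : 0 < y) (n k : ℕ) :
    |degFall lam (k : ℝ) n * a ^ k * y ^ ((k:ℝ)/lam) / (Nat.factorial k)| =
      |degFall lam (k : ℝ) n| * (|a| * y ^ (1/lam)) ^ k / (Nat.factorial k) := by
  have h1 : y ^ ((k:ℝ)/lam) = (y ^ (1/lam)) ^ k := by
    rw [← Real.rpow_natCast (y ^ (1/lam)) k, ← Real.rpow_mul hy.le]
    congr 1; ring
  rw [abs_div, abs_mul, abs_mul, abs_pow, Nat.abs_cast, h1, abs_of_nonneg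
    (pow_nonneg (Real.rpow_nonneg hy.le _) k), mul_pow]
  ring

lemma summable_B (lam a y : ℝ) (hy : 0 < y) (n : ℕ) :
    Summable (fun k : ℕ => degFall lam (k : ℝ) n * a ^ k * y ^ ((k:ℝ)/lam) / (Nat.factorial k)) := by
  apply Summable.of_norm_bounded (summable_main lam n 0 (|a| * y ^ (1/lam))
    (by positivity))
  intro k
  rw [Real.norm_eq_abs, term_abs lam a y hy n k, pow_zero, mul_one]

lemma summable_A (lam a y : ℝ) (hy : 0 < y) (n : ℕ) :
    Summable (fun k : ℕ =>
      degFall lam (k : ℝ) n * a ^ k * y ^ ((k:ℝ)/lam) * k / (Nat.factorial k)) := by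
  apply Summable.of_norm_bounded (summable_main lam n 1 (|a| * y ^ (1/lam))
    (by positivity))
  intro k
  rw [show degFall lam (k:ℝ) n * a ^ k * y ^ ((k:ℝ)/lam) * k / (Nat.factorial k)
      = (degFall lam (k:ℝ) n * a ^ k * y ^ ((k:ℝ)/lam) / (Nat.factorial k)) * k by ring]
  rw [Real.norm_eq_abs, abs_mul, term_abs lam a y hy n k, Nat.abs_cast, pow_one]
  apply le_of_eq; ring

lemma hasDerivAt_g (lam a : ℝ) (hlam : lam ≠ 0) (n k : ℕ) (t : ℝ) (ht : 0 < 1 + lam * t) :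
    HasDerivAt (fun s => degFall lam (k:ℝ) n * a ^ k * (1 + lam * s) ^ ((k:ℝ)/lam) /
        (Nat.factorial k))
      (degFall lam (k:ℝ) n * a ^ k * (1 + lam * t) ^ ((k:ℝ)/lam - 1) * k /
        (Nat.factorial k)) t := by
  have h1 : HasDerivAt (fun s : ℝ => 1 + lam * s) lam t := by
    simpa using ((hasDerivAt_id t).const_mul lam).const_add 1
  have h2 := (Real.hasDerivAt_rpow_const (x := 1 + lam * t) (p := (k:ℝ)/lam)
    (Or.inl (ne_of_gt ht))).comp t h1
  have h3 := (h2.const_mul (degFall lam (k:ℝ) n * a ^ k)).div_const (Nat.factorial k)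
  refine h3.congr_deriv ?_
  have hkl : (k:ℝ) / lam * lam = k := div_mul_cancel₀ _ hlam
  linear_combination ((degFall lam (k:ℝ) n * a ^ k * (1 + lam * t) ^ ((k:ℝ)/lam - 1) / (Nat.factorial k))) * hkl



lemma rpow_le_max (lam c C z : ℝ) (hc : 0 < c) (h1 : c < z) (h2 : z < C) :
    z ^ (1/lam) ≤ c ^ (1/lam) + C ^ (1/lam) := by
  rcases le_or_gt 0 (1/lam) with hp | hp
  · have : z ^ (1/lam) ≤ C ^ (1/lam) :=
      Real.rpow_le_rpow (by linarith) h2.le hp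
    have h0 : 0 ≤ c ^ (1/lam) := Real.rpow_nonneg hc.le _
    linarith
  · have : z ^ (1/lam) ≤ c ^ (1/lam) :=
      Real.rpow_le_rpow_of_nonpos hc h1.le hp.le
    have h0 : 0 ≤ C ^ (1/lam) := Real.rpow_nonneg (by linarith) _
    linarith

lemma hasDerivAt_T (lam a : ℝ) (hlam : lam ≠ 0) (n : ℕ) (t : ℝ) (ht : 0 < 1 + lam * t) :
    HasDerivAt (fun s => ∑' k : ℕ, degFall lam (k:ℝ) n * a ^ k *
        (1 + lam * s) ^ ((k:ℝ)/lam) / (Nat.factorial k))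
      (∑' k : ℕ, degFall lam (k:ℝ) n * a ^ k * (1 + lam * t) ^ ((k:ℝ)/lam - 1) * k /
        (Nat.factorial k)) t := by
  set y : ℝ := 1 + lam * t with hy
  set c : ℝ := y / 2 with hcdef
  set C : ℝ := y + 1 with hCdef
  have hc : 0 < c := by positivity
  set S : Set ℝ := (fun s : ℝ => 1 + lam * s) ⁻¹' Set.Ioo c C with hSdef
  set r : ℝ := c ^ (1/lam) + C ^ (1/lam) with hrdef
  have hr0 : 0 ≤ r := by
    have := Real.rpow_nonneg hc.le (1/lam)
    have := Real.rpow_nonneg (show (0:ℝ) ≤ C by rw [hCdef]; linarith) (1/lam)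
    rw [hrdef]; linarith
  set M : ℝ := |a| * r with hMdef
  have hM0 : 0 ≤ M := mul_nonneg (abs_nonneg _) hr0
  set u : ℕ → ℝ := fun k => |degFall lam (k:ℝ) n| * (k:ℝ) ^ 1 * M ^ k /
    (Nat.factorial k) / c with hudef
  have hu : Summable u := (summable_main lam n 1 M hM0).div_const c
  have hSopen : IsOpen S := (isOpen_Ioo).preimage (by continuity)
  have hSconv : Convex ℝ S := by
    intro p hp q hq θ₁ θ₂ hθ₁ hθ₂ hθ
    simp only [hSdef, Set.mem_preimage, Set.mem_Ioo] at hp hq ⊢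
    have e1 : 1 + lam * (θ₁ • p + θ₂ • q) = θ₁ * (1 + lam * p) + θ₂ * (1 + lam * q) := by
      simp only [smul_eq_mul]; nlinarith [hθ]
    rcases eq_or_lt_of_le hθ₁ with h | h
    · have : θ₂ = 1 := by linarith
      constructor <;> (rw [e1, ← h, this]; simp; linarith [hp.1, hp.2, hq.1, hq.2])
    · constructor
      · rw [e1]
        nlinarith [mul_lt_mul_of_pos_left hp.1 h, mul_le_mul_of_nonneg_left hq.1.le hθ₂]
      · rw [e1]
        nlinarith [mul_lt_mul_of_pos_left hp.2 h, mul_le_mul_of_nonneg_left hq.2.le hθ₂]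
  have hmem : ∀ s ∈ S, 0 < 1 + lam * s := by
    intro s hs
    have := (Set.mem_preimage.mp hs).1
    linarith
  have hbound : ∀ (k : ℕ), ∀ s ∈ S,
      ‖degFall lam (k:ℝ) n * a ^ k * (1 + lam * s) ^ ((k:ℝ)/lam - 1) * k /
        (Nat.factorial k)‖ ≤ u k := by
    intro k s hs
    obtain ⟨hs1, hs2⟩ := Set.mem_preimage.mp hs
    have hz : 0 < 1 + lam * s := hmem s hs
    have hrp : (1 + lam * s) ^ ((k:ℝ)/lam - 1) ≤ r ^ k / c := by
      rw [Real.rpow_sub hz, Real.rpow_one]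
      have hnum : (1 + lam * s) ^ ((k:ℝ)/lam) ≤ r ^ k := by
        have h1 : (1 + lam * s) ^ ((k:ℝ)/lam) = ((1 + lam * s) ^ (1/lam)) ^ k := by
          rw [← Real.rpow_natCast ((1 + lam * s) ^ (1/lam)) k, ← Real.rpow_mul hz.le]
          congr 1; ring
        rw [h1]
        exact pow_le_pow_left₀ (Real.rpow_nonneg hz.le _)
          (rpow_le_max lam c C _ hc hs1 hs2) k
      exact div_le_div₀ (pow_nonneg hr0 k) hnum hc hs1.le
    have Xpos : 0 < (1 + lam * s) ^ ((k:ℝ)/lam - 1) := Real.rpow_pos_of_pos hz _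
    rw [Real.norm_eq_abs, abs_div, abs_mul, abs_mul, abs_mul, abs_pow,
      abs_of_pos Xpos, Nat.abs_cast,
      abs_of_nonneg (show (0:ℝ) ≤ (Nat.factorial k : ℝ) from Nat.cast_nonneg _)]
    calc |degFall lam (k:ℝ) n| * |a| ^ k * (1 + lam * s) ^ ((k:ℝ)/lam - 1) * (k:ℝ) /
          (Nat.factorial k)
        ≤ |degFall lam (k:ℝ) n| * |a| ^ k * (r ^ k / c) * (k:ℝ) / (Nat.factorial k) := by
          gcongr
      _ = u k := by
          simp only [hudef, hMdef, mul_pow, pow_one]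
          field_simp
  have htS : t ∈ S := by
    simp only [hSdef, Set.mem_preimage, Set.mem_Ioo, ← hy]
    constructor
    · rw [hcdef]; linarith
    · rw [hCdef]; linarith
  exact hasDerivAt_tsum_of_isPreconnected hu hSopen hSconv.isPreconnected
    (fun k s hs => hasDerivAt_g lam a hlam n k s (hmem s hs))
    (fun k s hs => hbound k s hs) htS (summable_B lam a y ht n) htS

lemma xpow_eq (lam a t : ℝ) (ht : 0 < 1 + lam * t) (k : ℕ) :
    (a * degExp lam t) ^ k = a ^ k * (1 + lam * t) ^ ((k:ℝ)/lam) := by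
  rw [mul_pow, degExp, ← Real.rpow_natCast ((1 + lam * t) ^ (1/lam)) k,
    ← Real.rpow_mul ht.le]
  congr 2
  ring

lemma main_formula (lam a : ℝ) (hlam : lam ≠ 0) (n : ℕ) :
    ∀ t : ℝ, 0 < 1 + lam * t →
      iteratedDeriv n (fun s => Real.exp (a * degExp lam s)) t =
        (1 + lam * t) ^ (-(n:ℝ)) *
          ∑' k : ℕ, degFall lam (k:ℝ) n * a ^ k * (1 + lam * t) ^ ((k:ℝ)/lam) /
            (Nat.factorial k) := by
  induction n with
  | zero =>
    intro t ht
    rw [iteratedDeriv_zero]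
    simp only [Nat.cast_zero, neg_zero, Real.rpow_zero, one_mul]
    rw [myExp_tsum]
    apply tsum_congr
    intro k
    rw [xpow_eq lam a t ht k]
    simp [degFall_zero]
  | succ n ih =>
    intro t ht
    rw [iteratedDeriv_succ]
    have hD : IsOpen {s : ℝ | 0 < 1 + lam * s} := by
      have : {s : ℝ | 0 < 1 + lam * s} = (fun s => 1 + lam * s) ⁻¹' Set.Ioi 0 := rfl
      rw [this]; exact isOpen_Ioi.preimage (by continuity)
    have hEq : iteratedDeriv n (fun s => Real.exp (a * degExp lam s)) =ᶠ[nhds t]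
        (fun s => (1 + lam * s) ^ (-(n:ℝ)) *
          ∑' k : ℕ, degFall lam (k:ℝ) n * a ^ k * (1 + lam * s) ^ ((k:ℝ)/lam) /
            (Nat.factorial k)) := by
      filter_upwards [hD.mem_nhds ht] with s hs using ih s hs
    rw [hEq.deriv_eq]
    have h1 : HasDerivAt (fun s : ℝ => 1 + lam * s) lam t := by
      simpa using ((hasDerivAt_id t).const_mul lam).const_add 1
    have h2 : HasDerivAt (fun s : ℝ => (1 + lam * s) ^ (-(n:ℝ)))
        ((-(n:ℝ)) * (1 + lam * t) ^ (-(n:ℝ) - 1) * lam) t := by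
      exact (Real.hasDerivAt_rpow_const (x := 1 + lam * t)
        (p := -(n:ℝ)) (Or.inl (ne_of_gt ht))).comp t h1
    have h3 := hasDerivAt_T lam a hlam n t ht
    erw [(h2.mul h3).deriv]
    set y : ℝ := 1 + lam * t with hy
    have hA := summable_A lam a y ht n
    have hB := summable_B lam a y ht n
    have hS2' : (∑' k : ℕ, degFall lam (k:ℝ) n * a ^ k * y ^ ((k:ℝ)/lam - 1) * k /
          (Nat.factorial k)) =
        y⁻¹ * ∑' k : ℕ, degFall lam (k:ℝ) n * a ^ k * y ^ ((k:ℝ)/lam) * k /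
          (Nat.factorial k) := by
      rw [← tsum_mul_left]
      apply tsum_congr
      intro k
      rw [Real.rpow_sub ht, Real.rpow_one]
      ring
    have hS3 : (∑' k : ℕ, degFall lam (k:ℝ) (n+1) * a ^ k * y ^ ((k:ℝ)/lam) /
          (Nat.factorial k)) =
        (∑' k : ℕ, degFall lam (k:ℝ) n * a ^ k * y ^ ((k:ℝ)/lam) * k /
          (Nat.factorial k)) -
        (n * lam) * ∑' k : ℕ, degFall lam (k:ℝ) n * a ^ k * y ^ ((k:ℝ)/lam) /
          (Nat.factorial k) := by
      rw [← tsum_mul_left, ← hA.tsum_sub (hB.mul_left ((n:ℝ) * lam))]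
      apply tsum_congr
      intro k
      rw [degFall_succ]
      ring
    rw [hS2', hS3]
    have e2 : y ^ (-(n:ℝ) - 1) = y ^ (-(n:ℝ)) / y := by
      rw [Real.rpow_sub ht, Real.rpow_one]
    have e3 : y ^ (-(((n+1):ℕ):ℝ)) = y ^ (-(n:ℝ)) / y := by
      push_cast
      rw [show -((n:ℝ)+1) = -(n:ℝ) - 1 by ring, Real.rpow_sub ht, Real.rpow_one]
    rw [e2, e3]
    ring

/-- the n-th derivative of `t ↦ exp(a e_λ(t))`. -/
theorem iteratedDeriv_exp_degExp (lam a : ℝ) (hlam : lam ≠ 0) (ha : a ≠ 0)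
    (n : ℕ) (t : ℝ) (ht : 1 + lam * t > 0) :
    iteratedDeriv n (fun s => Real.exp (a * degExp lam s)) t =
      (1 + lam * t) ^ (-(n : ℝ)) * Bel lam (a * degExp lam t) n *
        Real.exp (a * degExp lam t) := by
  rw [main_formula lam a hlam n t ht, Bel]
  rw [show (∑' k : ℕ, degFall lam (k:ℝ) n * (a * degExp lam t) ^ k / (Nat.factorial k))
      = ∑' k : ℕ, degFall lam (k:ℝ) n * a ^ k * (1 + lam * t) ^ ((k:ℝ)/lam) /
        (Nat.factorial k) from tsum_congr fun k => by rw [xpow_eq lam a t ht k]; ring]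
  rw [Real.exp_neg]
  field_simp [Real.exp_ne_zero]
end

section
/- For every nonnegative integer n and all x > 0, the n-fold application of the operator x^{1-λ} · d/dx to the function e^x equals ∑_{k=0}^{∞} (k)_{n,λ} x^{k - nλ} / k!, which in turn equals x^{-nλ} · Bel_{n,λ}(x) · e^x. -/
open Finset

/-- The operator `f ↦ (x ↦ x^{1-λ} f'(x))`. -/
noncomputable def Lop (lam : ℝ) (f : ℝ → ℝ) : ℝ → ℝ := fun x => x ^ ((1 : ℝ) - lam) * deriv f x

/-- Sum appearing in the Bell polynomial. -/
noncomputable def belSum (lam : ℝ) (n : ℕ) (x : ℝ) : ℝ :=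
  ∑' k : ℕ, degFall lam (k : ℝ) n * x ^ k / (Nat.factorial k)

lemma summable_pow_div_fact (M : ℕ) (R : ℝ) (hR : 0 ≤ R) :
    Summable (fun k : ℕ => ((k : ℝ) + 1) ^ M * R ^ k / (Nat.factorial k)) := by
  apply summable_of_ratio_norm_eventually_le (r := 1/2) (by norm_num)
  obtain ⟨N, hN⟩ := exists_nat_ge (2 ^ (M + 1) * R)
  filter_upwards [Filter.eventually_ge_atTop N] with k hk
  have hk1 : (0 : ℝ) < (k : ℝ) + 1 := by positivity
  have hfac : (0 : ℝ) < (Nat.factorial k : ℝ) := by positivity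
  have hR' : R ≤ ((k : ℝ) + 1) / 2 ^ (M + 1) := by
    rw [le_div_iff₀ (by positivity)]
    have : (N : ℝ) ≤ (k : ℝ) := by exact_mod_cast hk
    nlinarith [hN]
  have key : ((k : ℝ) + 1 + 1) ^ M * R ≤ (1/2) * (((k : ℝ) + 1) ^ M * ((k : ℝ) + 1)) := by
    calc ((k : ℝ) + 1 + 1) ^ M * R ≤ (2 * ((k : ℝ) + 1)) ^ M * R :=
          mul_le_mul_of_nonneg_right (pow_le_pow_left₀ (by positivity) (by linarith) M) hR
      _ = 2 ^ M * ((k : ℝ) + 1) ^ M * R := by rw [mul_pow]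
      _ ≤ 2 ^ M * ((k : ℝ) + 1) ^ M * (((k : ℝ) + 1) / 2 ^ (M + 1)) :=
          mul_le_mul_of_nonneg_left hR' (by positivity)
      _ = (1/2) * (((k : ℝ) + 1) ^ M * ((k : ℝ) + 1)) := by
          rw [pow_succ]
          field_simp
  have h1 : (0:ℝ) ≤ ((k : ℝ) + 1 + 1) ^ M * R ^ (k+1) / (Nat.factorial (k+1)) := by positivity
  have h2 : (0:ℝ) ≤ ((k : ℝ) + 1) ^ M * R ^ k / (Nat.factorial k) := by positivity
  rw [Real.norm_of_nonneg (by push_cast; exact h1), Real.norm_of_nonneg h2]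
  push_cast
  rw [Nat.factorial_succ]
  push_cast
  rw [pow_succ]
  have rhs_eq : 1/2 * (((k : ℝ) + 1) ^ M * R ^ k / (Nat.factorial k)) =
      ((1/2) * (((k : ℝ) + 1) ^ M * ((k : ℝ) + 1)) * R ^ k) /
        (((k : ℝ) + 1) * (Nat.factorial k)) := by
    field_simp
  rw [rhs_eq]
  gcongr ?_ / _
  nlinarith [mul_le_mul_of_nonneg_right key (pow_nonneg hR k)]

lemma degFall_bound (lam : ℝ) (n : ℕ) (k : ℕ) :
    |degFall lam (k : ℝ) n| ≤ ((1 + n * |lam|) * ((k : ℝ) + 1)) ^ n := by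
  unfold degFall
  rw [Finset.abs_prod]
  calc (∏ i ∈ Finset.range n, |(k : ℝ) - i * lam|)
      ≤ ∏ i ∈ Finset.range n, ((1 + n * |lam|) * ((k : ℝ) + 1)) := by
        apply Finset.prod_le_prod (fun i _ => abs_nonneg _)
        intro i hi
        have hi' : (i : ℝ) ≤ (n : ℝ) := by
          exact_mod_cast le_of_lt (Finset.mem_range.mp hi)
        have h1 : |(k : ℝ) - i * lam| ≤ (k : ℝ) + i * |lam| := by
          calc |(k : ℝ) - i * lam| ≤ |(k : ℝ)| + |(i : ℝ) * lam| := abs_sub _ _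
            _ = (k : ℝ) + i * |lam| := by
                rw [abs_of_nonneg (by positivity), abs_mul, Nat.abs_cast]
        have h2 : (i : ℝ) * |lam| ≤ (n : ℝ) * |lam| := by
          apply mul_le_mul_of_nonneg_right hi' (abs_nonneg _)
        have hk0 : (0 : ℝ) ≤ (k : ℝ) := Nat.cast_nonneg k
        have hl0 : (0 : ℝ) ≤ |lam| := abs_nonneg _
        have hn0 : (0 : ℝ) ≤ (n : ℝ) := Nat.cast_nonneg n
        nlinarith [mul_nonneg (mul_nonneg hn0 hl0) hk0]
    _ = ((1 + n * |lam|) * ((k : ℝ) + 1)) ^ n := by rw [Finset.prod_const, Finset.card_range]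

lemma summable_degFall (lam : ℝ) (n m : ℕ) (R : ℝ) (hR : 0 ≤ R) :
    Summable (fun k : ℕ =>
      |degFall lam (k : ℝ) n| * ((k : ℝ) + 1) ^ m * R ^ k / (Nat.factorial k)) := by
  refine Summable.of_nonneg_of_le (fun k => by positivity) (fun k => ?_)
    (((summable_pow_div_fact (n + m) R hR).mul_left ((1 + n * |lam|) ^ n)))
  have hb := degFall_bound lam n k
  have hrw : (1 + (n:ℝ) * |lam|) ^ n * (((k : ℝ) + 1) ^ (n + m) * R ^ k / (Nat.factorial k)) =
      ((1 + (n:ℝ) * |lam|) ^ n * ((k : ℝ) + 1) ^ n) * ((k : ℝ) + 1) ^ m * R ^ k /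
        (Nat.factorial k) := by
    rw [pow_add]; ring
  rw [hrw]
  gcongr
  rw [← mul_pow]
  exact hb

lemma summable_term (lam : ℝ) (n : ℕ) (x : ℝ) :
    Summable (fun k : ℕ => degFall lam (k : ℝ) n * x ^ k / (Nat.factorial k)) := by
  apply Summable.of_norm
  refine Summable.of_nonneg_of_le (fun k => norm_nonneg _) (fun k => ?_)
    (summable_degFall lam n 1 |x| (abs_nonneg x))
  rw [norm_div, norm_mul, Real.norm_natCast, Real.norm_eq_abs, Real.norm_eq_abs, abs_pow]
  have h1 : (1:ℝ) ≤ ((k : ℝ) + 1) ^ 1 := by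
    rw [pow_one]; have : (0:ℝ) ≤ (k:ℝ) := Nat.cast_nonneg k; linarith
  have h2 : |degFall lam (k : ℝ) n| * |x| ^ k ≤
      |degFall lam (k : ℝ) n| * ((k : ℝ) + 1) ^ 1 * |x| ^ k := by
    nlinarith [mul_nonneg (mul_nonneg (abs_nonneg (degFall lam (k:ℝ) n))
      (pow_nonneg (abs_nonneg x) k)) (by linarith : (0:ℝ) ≤ ((k:ℝ) + 1) ^ 1 - 1)]
  gcongr

lemma summable_term_mul (lam : ℝ) (n : ℕ) (x : ℝ) :
    Summable (fun k : ℕ =>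
      degFall lam (k : ℝ) n * ((k : ℝ) * x ^ (k - 1)) / (Nat.factorial k)) := by
  set R : ℝ := max 1 |x| with hRdef
  have hR : 0 ≤ R := le_trans zero_le_one (le_max_left _ _)
  apply Summable.of_norm
  refine Summable.of_nonneg_of_le (fun k => norm_nonneg _) (fun k => ?_)
    (summable_degFall lam n 1 R hR)
  rw [norm_div, norm_mul, Real.norm_natCast, norm_mul, Real.norm_natCast,
    Real.norm_eq_abs, Real.norm_eq_abs, abs_pow]
  have hxR : |x| ^ (k - 1) ≤ R ^ k := by
    calc |x| ^ (k - 1) ≤ R ^ (k - 1) :=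
          pow_le_pow_left₀ (abs_nonneg x) (le_max_right _ _) _
      _ ≤ R ^ k := pow_le_pow_right₀ (le_max_left _ _) (Nat.sub_le k 1)
  have hk1 : (k : ℝ) ≤ ((k : ℝ) + 1) ^ 1 := by
    rw [pow_one]; linarith
  calc |degFall lam (k : ℝ) n| * ((k : ℝ) * |x| ^ (k - 1)) / (Nat.factorial k)
      ≤ |degFall lam (k : ℝ) n| * (((k : ℝ) + 1) ^ 1 * R ^ k) / (Nat.factorial k) := by
        have hk0 : (0:ℝ) ≤ (k : ℝ) := Nat.cast_nonneg k
        gcongr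
    _ = |degFall lam (k : ℝ) n| * ((k : ℝ) + 1) ^ 1 * R ^ k / (Nat.factorial k) := by ring

lemma belSum_hasDerivAt (lam : ℝ) (n : ℕ) (x : ℝ) (hx : 0 < x) :
    HasDerivAt (fun y : ℝ => belSum lam n y)
      (∑' k : ℕ, degFall lam (k : ℝ) n * ((k : ℝ) * x ^ (k - 1)) / (Nat.factorial k)) x := by
  have hx1 : (1 : ℝ) ≤ x + 1 := by linarith
  have hsum_u : Summable (fun k : ℕ =>
      |degFall lam (k : ℝ) n| * ((k : ℝ) + 1) ^ 1 * (x + 1) ^ k / (Nat.factorial k)) :=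
    summable_degFall lam n 1 (x + 1) (by linarith)
  have hderiv : ∀ (k : ℕ) (y : ℝ), y ∈ Set.Ioo (0:ℝ) (x+1) →
      HasDerivAt (fun z : ℝ => degFall lam (k : ℝ) n * z ^ k / (Nat.factorial k))
        (degFall lam (k : ℝ) n * ((k : ℝ) * y ^ (k - 1)) / (Nat.factorial k)) y := by
    intro k y _
    have h := ((hasDerivAt_pow k y).const_mul (degFall lam (k : ℝ) n)).div_const
      ((Nat.factorial k : ℝ))
    convert h using 1
  have hbound : ∀ (k : ℕ) (y : ℝ), y ∈ Set.Ioo (0:ℝ) (x+1) →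
      ‖degFall lam (k : ℝ) n * ((k : ℝ) * y ^ (k - 1)) / (Nat.factorial k)‖ ≤
        |degFall lam (k : ℝ) n| * ((k : ℝ) + 1) ^ 1 * (x + 1) ^ k / (Nat.factorial k) := by
    intro k y hy
    obtain ⟨hy0, hy1⟩ := hy
    rw [Real.norm_eq_abs, abs_div, abs_mul, abs_mul, Nat.abs_cast, Nat.abs_cast, abs_pow,
      abs_of_nonneg hy0.le]
    have h1 : y ^ (k - 1) ≤ (x + 1) ^ k := by
      calc y ^ (k - 1) ≤ (x + 1) ^ (k - 1) := pow_le_pow_left₀ hy0.le hy1.le _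
        _ ≤ (x + 1) ^ k := pow_le_pow_right₀ hx1 (Nat.sub_le k 1)
    have h2 : (k : ℝ) ≤ ((k : ℝ) + 1) ^ 1 := by rw [pow_one]; linarith
    have hy' : (0:ℝ) ≤ y ^ (k - 1) := pow_nonneg hy0.le _
    have hk0 : (0:ℝ) ≤ (k : ℝ) := Nat.cast_nonneg k
    calc |degFall lam (k : ℝ) n| * ((k : ℝ) * y ^ (k - 1)) / (Nat.factorial k)
        ≤ |degFall lam (k : ℝ) n| * (((k : ℝ) + 1) ^ 1 * (x + 1) ^ k) / (Nat.factorial k) := by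
          gcongr
      _ = |degFall lam (k : ℝ) n| * ((k : ℝ) + 1) ^ 1 * (x + 1) ^ k / (Nat.factorial k) := by
          ring
  have hmem : x ∈ Set.Ioo (0:ℝ) (x+1) := Set.mem_Ioo.mpr ⟨hx, by linarith⟩
  simp only [belSum]
  exact hasDerivAt_tsum_of_isPreconnected hsum_u isOpen_Ioo
    (convex_Ioo (0:ℝ) (x+1)).isPreconnected hderiv hbound hmem (summable_term lam n x) hmem

lemma belSum_succ (lam : ℝ) (n : ℕ) (x : ℝ) :
    belSum lam (n + 1) x =
      x * (∑' k : ℕ, degFall lam (k : ℝ) n * ((k : ℝ) * x ^ (k - 1)) / (Nat.factorial k)) -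
        (n * lam) * belSum lam n x := by
  unfold belSum
  rw [← tsum_mul_left, ← tsum_mul_left, ← Summable.tsum_sub ((summable_term_mul lam n x).mul_left x)
    ((summable_term lam n x).mul_left _)]
  apply tsum_congr
  intro k
  rw [degFall_succ]
  rcases k with _ | k
  · simp [mul_comm]
  · push_cast
    rw [pow_succ]
    have hfac : ((Nat.factorial (k+1) : ℝ)) ≠ 0 := by positivity
    field_simp

lemma exp_eq_belSum (lam x : ℝ) : belSum lam 0 x = Real.exp x := by
  unfold belSum
  simp only [degFall, Finset.range_zero, Finset.prod_empty, one_mul]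
  rw [Real.exp_eq_exp_ℝ, NormedSpace.exp_eq_tsum_div]

lemma iterate_eq (lam : ℝ) (n : ℕ) :
    ∀ x : ℝ, 0 < x →
      (Lop lam)^[n] Real.exp x = x ^ (-((n : ℝ) * lam)) * belSum lam n x := by
  induction n with
  | zero =>
    intro x hx
    simp [exp_eq_belSum]
  | succ n ih =>
    intro x hx
    rw [Function.iterate_succ_apply']
    show x ^ ((1 : ℝ) - lam) * deriv ((Lop lam)^[n] Real.exp) x = _
    have heq : deriv ((Lop lam)^[n] Real.exp) x =
        deriv (fun y => y ^ (-((n : ℝ) * lam)) * belSum lam n y) x := by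
      apply Filter.EventuallyEq.deriv_eq
      filter_upwards [isOpen_Ioi.mem_nhds (Set.mem_Ioi.mpr hx)] with y hy
      exact ih y hy
    have hG : HasDerivAt (fun y => y ^ (-((n : ℝ) * lam)) * belSum lam n y)
        ((-((n : ℝ) * lam) * x ^ (-((n : ℝ) * lam) - 1)) * belSum lam n x +
          x ^ (-((n : ℝ) * lam)) *
            (∑' k : ℕ, degFall lam (k : ℝ) n * ((k : ℝ) * x ^ (k - 1)) /
              (Nat.factorial k))) x :=
      (Real.hasDerivAt_rpow_const (Or.inl hx.ne')).mul (belSum_hasDerivAt lam n x hx)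
    have e1 : x ^ ((1:ℝ) - lam) * x ^ (-((n : ℝ) * lam) - 1) =
        x ^ (-(((n : ℝ) + 1) * lam)) := by
      rw [← Real.rpow_add hx]
      congr 1
      ring
    have e2 : x ^ ((1:ℝ) - lam) * x ^ (-((n : ℝ) * lam)) =
        x ^ (-(((n : ℝ) + 1) * lam)) * x := by
      rw [← Real.rpow_add hx,
        show (1:ℝ) - lam + -((n : ℝ) * lam) = -(((n : ℝ) + 1) * lam) + 1 by ring,
        Real.rpow_add hx, Real.rpow_one]
    rw [heq, hG.deriv, belSum_succ]
    push_cast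
    calc x ^ ((1:ℝ) - lam) *
          ((-((n : ℝ) * lam) * x ^ (-((n : ℝ) * lam) - 1)) * belSum lam n x +
            x ^ (-((n : ℝ) * lam)) *
              (∑' k : ℕ, degFall lam (k : ℝ) n * ((k : ℝ) * x ^ (k - 1)) / (Nat.factorial k)))
        = (-((n : ℝ) * lam)) * (x ^ ((1:ℝ) - lam) * x ^ (-((n : ℝ) * lam) - 1)) * belSum lam n x
            + (x ^ ((1:ℝ) - lam) * x ^ (-((n : ℝ) * lam))) *
              (∑' k : ℕ, degFall lam (k : ℝ) n * ((k : ℝ) * x ^ (k - 1)) /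
                (Nat.factorial k)) := by ring
      _ = (-((n : ℝ) * lam)) * x ^ (-(((n : ℝ) + 1) * lam)) * belSum lam n x
            + (x ^ (-(((n : ℝ) + 1) * lam)) * x) *
              (∑' k : ℕ, degFall lam (k : ℝ) n * ((k : ℝ) * x ^ (k - 1)) /
                (Nat.factorial k)) := by rw [e1, e2]
      _ = x ^ (-(((n : ℝ) + 1) * lam)) *
            (x * (∑' k : ℕ, degFall lam (k : ℝ) n * ((k : ℝ) * x ^ (k - 1)) /
                (Nat.factorial k)) -
              (n : ℝ) * lam * belSum lam n x) := by ring

/-- `(x^{1-λ} d/dx)^n e^x = ∑_{k≥0} (k)_{n,λ} x^{k-nλ}/k! = x^{-nλ} Bel_{n,λ}(x) e^x`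
for `x > 0`. -/
theorem lop_iterate_exp (lam : ℝ) (n : ℕ) (x : ℝ) (hx : 0 < x) :
    (Lop lam)^[n] Real.exp x =
        ∑' k : ℕ, degFall lam (k : ℝ) n * x ^ ((k : ℝ) - n * lam) / (Nat.factorial k) ∧
      (∑' k : ℕ, degFall lam (k : ℝ) n * x ^ ((k : ℝ) - n * lam) / (Nat.factorial k)) =
        x ^ (-(n * lam)) * Bel lam x n * Real.exp x := by
  have hsum : (∑' k : ℕ, degFall lam (k : ℝ) n * x ^ ((k : ℝ) - n * lam) / (Nat.factorial k)) =
      x ^ (-((n : ℝ) * lam)) * belSum lam n x := by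
    unfold belSum
    rw [← tsum_mul_left]
    apply tsum_congr
    intro k
    have hr : x ^ ((k : ℝ) - n * lam) = x ^ (-((n : ℝ) * lam)) * x ^ k := by
      rw [← Real.rpow_natCast x k, ← Real.rpow_add hx]
      congr 1
      ring
    rw [hr]
    ring
  constructor
  · rw [hsum]
    exact iterate_eq lam n x hx
  · rw [hsum]
    unfold Bel belSum
    rw [Real.exp_neg]
    have h := Real.exp_ne_zero x
    field_simp
end

section
/- For every nonnegative integer n and all real x, Bel_{n+1,λ}(x) = x·(Bel'_{n,λ}(x) + Bel_{n,λ}(x)) − nλ·Bel_{n,λ}(x), where Bel'_{n,λ} denotes the derivative of Bel_{n,λ}. -/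
open Finset

lemma fall_succ (x : ℝ) (k : ℕ) : fall x (k + 1) = fall x k * (x - k) := by
  simp [fall, Finset.prod_range_succ]

lemma fall_nat_eq_zero {k j : ℕ} (h : k < j) : fall (k : ℝ) j = 0 :=
  Finset.prod_eq_zero (Finset.mem_range.mpr h) (by simp)

lemma fall_nat_pos (k : ℕ) : 0 < fall (k : ℝ) k := by
  apply Finset.prod_pos
  intro i hi
  rw [Finset.mem_range] at hi
  have : (i : ℝ) < k := by exact_mod_cast hi
  linarith

lemma fall_uniq (N : ℕ) (a : ℕ → ℝ)
    (h : ∀ x : ℝ, ∑ k ∈ range N, a k * fall x k = 0) :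
    ∀ k < N, a k = 0 := by
  intro k
  induction k using Nat.strong_induction_on with
  | _ k ih =>
    intro hk
    have h0 := h (k : ℝ)
    have hsum : ∑ j ∈ range N, a j * fall (k : ℝ) j = a k * fall (k : ℝ) k := by
      apply Finset.sum_eq_single
      · intro j hj hjk
        rcases lt_or_gt_of_ne hjk with hl | hg
        · rw [ih j hl (Finset.mem_range.mp hj), zero_mul]
        · rw [fall_nat_eq_zero hg, mul_zero]
      · intro hkm; exact absurd (Finset.mem_range.mpr hk) hkm
    rw [hsum] at h0
    exact (mul_eq_zero.mp h0).resolve_right (ne_of_gt (fall_nat_pos k))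

/-- with `Bel_{n,λ}(x) = ∑_{k=0}^n S_{2,λ}(n,k) x^k`, one has
`Bel_{n+1,λ}(x) = x (Bel'_{n,λ}(x) + Bel_{n,λ}(x)) − nλ Bel_{n,λ}(x)`. -/
theorem degenerate_bell_recurrence_deriv (lam : ℝ) (S2 : ℕ → ℕ → ℝ)
    (hS2 : ∀ (n : ℕ) (x : ℝ), degFall lam x n = ∑ k ∈ range (n + 1), S2 n k * fall x k)
    (n : ℕ) (x : ℝ) :
    ∑ k ∈ range (n + 2), S2 (n + 1) k * x ^ k =
      x * (deriv (fun y => ∑ k ∈ range (n + 1), S2 n k * y ^ k) x +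
            ∑ k ∈ range (n + 1), S2 n k * x ^ k) -
        n * lam * ∑ k ∈ range (n + 1), S2 n k * x ^ k := by
  set c : ℕ → ℝ := fun k =>
    (if k ≤ n then ((k : ℝ) - n * lam) * S2 n k else 0) +
    (if k = 0 then 0 else S2 n (k - 1)) with hc
  -- generic sum identity for c
  have csum : ∀ g : ℕ → ℝ,
      ∑ k ∈ range (n + 2), c k * g k =
        ∑ k ∈ range (n + 1), ((k : ℝ) - n * lam) * S2 n k * g k +
        ∑ k ∈ range (n + 1), S2 n k * g (k + 1) := by
    intro g
    have : ∑ k ∈ range (n + 2), c k * g k =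
        ∑ k ∈ range (n + 2), ((if k ≤ n then ((k : ℝ) - n * lam) * S2 n k else 0) * g k) +
        ∑ k ∈ range (n + 2), ((if k = 0 then 0 else S2 n (k - 1)) * g k) := by
      rw [← Finset.sum_add_distrib]
      apply Finset.sum_congr rfl
      intro k _; rw [hc]; ring
    rw [this]
    congr 1
    · rw [Finset.sum_range_succ, if_neg (by omega), zero_mul, add_zero]
      apply Finset.sum_congr rfl
      intro k hk
      rw [if_pos (Nat.lt_succ_iff.mp (Finset.mem_range.mp hk))]
    · rw [Finset.sum_range_succ']
      have h0 : (if (0:ℕ) = 0 then (0:ℝ) else S2 n (0 - 1)) * g 0 = 0 := by simp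
      rw [h0, add_zero]
      apply Finset.sum_congr rfl
      intro k _
      simp
  -- c gives the expansion of degFall (n+1)
  have key : ∀ y : ℝ, ∑ k ∈ range (n + 2), c k * fall y k =
      ∑ k ∈ range (n + 2), S2 (n + 1) k * fall y k := by
    intro y
    rw [csum (fall y), ← hS2 (n + 1) y]
    have hdeg : degFall lam y (n + 1) = (y - n * lam) * degFall lam y n := by
      rw [degFall, Finset.prod_range_succ, degFall]; ring
    rw [hdeg, hS2 n y, Finset.mul_sum, ← Finset.sum_add_distrib]
    apply Finset.sum_congr rfl
    intro k _
    rw [fall_succ]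
    ring
  -- hence coefficients agree
  have hcoef : ∀ k < n + 2, S2 (n + 1) k = c k := by
    have := fall_uniq (n + 2) (fun k => S2 (n + 1) k - c k) (by
      intro y
      have : ∑ k ∈ range (n + 2), (S2 (n + 1) k - c k) * fall y k =
          (∑ k ∈ range (n + 2), S2 (n + 1) k * fall y k) -
          ∑ k ∈ range (n + 2), c k * fall y k := by
        rw [← Finset.sum_sub_distrib]
        apply Finset.sum_congr rfl
        intro k _; ring
      rw [this, key y, sub_self])
    intro k hk
    have h2 : S2 (n + 1) k - c k = 0 := this k hk
    linarith
  -- compute the derivative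
  have hderiv : deriv (fun y => ∑ k ∈ range (n + 1), S2 n k * y ^ k) x =
      ∑ k ∈ range (n + 1), S2 n k * (k * x ^ (k - 1)) := by
    have : HasDerivAt (fun y => ∑ k ∈ range (n + 1), S2 n k * y ^ k)
        (∑ k ∈ range (n + 1), S2 n k * (k * x ^ (k - 1))) x := by
      apply HasDerivAt.fun_sum
      intro k _
      exact (hasDerivAt_pow k x).const_mul (S2 n k)
    exact this.deriv
  -- rewrite LHS via hcoef, then finish
  calc ∑ k ∈ range (n + 2), S2 (n + 1) k * x ^ k
      = ∑ k ∈ range (n + 2), c k * x ^ k := by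
        apply Finset.sum_congr rfl
        intro k hk
        rw [hcoef k (Finset.mem_range.mp hk)]
    _ = ∑ k ∈ range (n + 1), ((k : ℝ) - n * lam) * S2 n k * x ^ k +
        ∑ k ∈ range (n + 1), S2 n k * x ^ (k + 1) := csum (fun k => x ^ k)
    _ = x * (deriv (fun y => ∑ k ∈ range (n + 1), S2 n k * y ^ k) x +
            ∑ k ∈ range (n + 1), S2 n k * x ^ k) -
        n * lam * ∑ k ∈ range (n + 1), S2 n k * x ^ k := by
        rw [hderiv, mul_add, Finset.mul_sum, Finset.mul_sum, Finset.mul_sum,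
          ← Finset.sum_add_distrib, ← Finset.sum_add_distrib, ← Finset.sum_sub_distrib]
        apply Finset.sum_congr rfl
        intro k _
        have hx : x * (S2 n k * ((k : ℝ) * x ^ (k - 1))) = (k : ℝ) * S2 n k * x ^ k := by
          cases k with
          | zero => simp
          | succ m => simp only [Nat.add_sub_cancel, Nat.cast_succ]; ring
        rw [hx, pow_succ]
        ring
end

section
/- For nonnegative integers n and k, (1/k!) · ∑_{j=0}^{k} C(k,j) · (−1)^{k−j} · (j)_{n,λ} equals S_{2,λ}(n,k) if n ≥ k, and equals 0 if 0 ≤ n < k. -/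
open Finset

lemma fall_cast (j m : ℕ) : fall (j : ℝ) m = (j.descFactorial m : ℝ) := by
  induction m with
  | zero => simp [fall]
  | succ m ih =>
    rw [fall, Finset.prod_range_succ, ← fall, ih, Nat.descFactorial_succ]
    rcases lt_or_ge j m with h | h
    · rw [Nat.descFactorial_eq_zero_iff_lt.2 h]; simp
    · push_cast [h]; ring

lemma alt_sum_real (d : ℕ) :
    ∑ i ∈ range (d + 1), (-1 : ℝ) ^ i * (d.choose i : ℝ) = if d = 0 then 1 else 0 := by
  by_cases hd : d = 0
  · subst hd; simp
  · rw [if_neg hd]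
    have h := Int.alternating_sum_range_choose_of_ne hd
    exact_mod_cast congrArg (fun z : ℤ => (z : ℝ)) h

lemma key_sum (k m : ℕ) :
    ∑ j ∈ range (k + 1), (k.choose j : ℝ) * (-1) ^ (k - j) * fall (j : ℝ) m =
      if m = k then (k.factorial : ℝ) else 0 := by
  simp only [fall_cast]
  rcases lt_or_ge k m with hkm | hmk
  · rw [if_neg (by omega)]
    apply Finset.sum_eq_zero
    intro j hj
    simp only [mem_range] at hj
    rw [Nat.descFactorial_eq_zero_iff_lt.2 (by omega)]
    simp
  · -- split the range at m
    rw [Finset.range_eq_Ico, ← Finset.sum_Ico_consecutive _ (Nat.zero_le m) (by omega)]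
    have h1 : ∑ j ∈ Finset.Ico 0 m, (k.choose j : ℝ) * (-1) ^ (k - j) * (j.descFactorial m : ℝ) = 0 := by
      apply Finset.sum_eq_zero
      intro j hj
      simp only [Finset.mem_Ico] at hj
      rw [Nat.descFactorial_eq_zero_iff_lt.2 (by omega)]
      simp
    rw [h1, zero_add, Finset.sum_Ico_eq_sum_range]
    have h2 : ∀ i ∈ range (k + 1 - m),
        (k.choose (m + i) : ℝ) * (-1) ^ (k - (m + i)) * ((m + i).descFactorial m : ℝ)
        = ((m.factorial : ℝ) * (k.choose m : ℝ)) *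
          ((-1 : ℝ) ^ ((k - m) - i) * ((k - m).choose i : ℝ)) := by
      intro i hi
      simp only [mem_range] at hi
      have hik : m + i ≤ k := by omega
      have hcm : k.choose (m + i) * (m + i).choose m = k.choose m * (k - m).choose i := by
        have := Nat.choose_mul (n := k) (Nat.le_add_right m i)
        simpa [Nat.add_sub_cancel_left] using this
      rw [Nat.descFactorial_eq_factorial_mul_choose]
      have : (k.choose (m + i) : ℝ) * ((m + i).choose m : ℝ) = (k.choose m : ℝ) * ((k - m).choose i : ℝ) := by
        exact_mod_cast congrArg (Nat.cast : ℕ → ℝ) hcm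
      have hexp : k - (m + i) = (k - m) - i := by omega
      push_cast
      rw [hexp]
      linear_combination ((m.factorial : ℝ) * (-1 : ℝ) ^ (k - m - i)) * this
    rw [Finset.sum_congr rfl h2, ← Finset.mul_sum]
    have hrange : k + 1 - m = (k - m) + 1 := by omega
    rw [hrange]
    have h3 : ∑ i ∈ range ((k - m) + 1), (-1 : ℝ) ^ ((k - m) - i) * ((k - m).choose i : ℝ)
        = if k - m = 0 then 1 else 0 := by
      have h4 : ∀ i ∈ range ((k - m) + 1),
          (-1 : ℝ) ^ ((k - m) - i) * ((k - m).choose i : ℝ)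
          = (-1 : ℝ) ^ (k - m) * ((-1 : ℝ) ^ i * ((k - m).choose i : ℝ)) := by
        intro i hi
        simp only [mem_range] at hi
        have : (-1 : ℝ) ^ ((k - m) - i) * (-1 : ℝ) ^ i = (-1 : ℝ) ^ (k - m) := by
          rw [← pow_add]; congr 1; omega
        have hbb : (-1 : ℝ) ^ i * (-1 : ℝ) ^ i = 1 := by
          rw [← mul_pow]; norm_num
        linear_combination (((k - m).choose i : ℝ) * (-1 : ℝ) ^ i) * this -
          ((-1 : ℝ) ^ ((k - m) - i) * ((k - m).choose i : ℝ)) * hbb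
      rw [Finset.sum_congr rfl h4, ← Finset.mul_sum, alt_sum_real]
      split
      · rename_i h; rw [h]; norm_num
      · ring
    rw [h3]
    by_cases hmk' : m = k
    · subst hmk'
      simp [Nat.choose_self, Nat.sub_self]
    · rw [if_neg (by omega), if_neg hmk']
      ring

/-- explicit formula for the degenerate Stirling numbers of the second kind. -/
theorem degenerate_stirling_second_formula (lam : ℝ) (S2 : ℕ → ℕ → ℝ)
    (hS2 : ∀ (n : ℕ) (x : ℝ), degFall lam x n = ∑ k ∈ range (n + 1), S2 n k * fall x k)
    (n k : ℕ) :
    (k ≤ n →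
      (1 / (Nat.factorial k : ℝ)) *
        ∑ j ∈ range (k + 1), (k.choose j : ℝ) * (-1) ^ (k - j) * degFall lam (j : ℝ) n =
        S2 n k) ∧
    (n < k →
      (1 / (Nat.factorial k : ℝ)) *
        ∑ j ∈ range (k + 1), (k.choose j : ℝ) * (-1) ^ (k - j) * degFall lam (j : ℝ) n =
        0) := by
  have hmain : ∑ j ∈ range (k + 1), (k.choose j : ℝ) * (-1) ^ (k - j) * degFall lam (j : ℝ) n
      = ∑ m ∈ range (n + 1), S2 n m * (if m = k then (k.factorial : ℝ) else 0) := by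
    calc ∑ j ∈ range (k + 1), (k.choose j : ℝ) * (-1) ^ (k - j) * degFall lam (j : ℝ) n
        = ∑ j ∈ range (k + 1), ∑ m ∈ range (n + 1),
            S2 n m * ((k.choose j : ℝ) * (-1) ^ (k - j) * fall (j : ℝ) m) := by
          apply Finset.sum_congr rfl
          intro j _
          rw [hS2 n (j : ℝ), Finset.mul_sum]
          apply Finset.sum_congr rfl
          intro m _
          ring
      _ = ∑ m ∈ range (n + 1), S2 n m *
            ∑ j ∈ range (k + 1), (k.choose j : ℝ) * (-1) ^ (k - j) * fall (j : ℝ) m := by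
          rw [Finset.sum_comm]
          apply Finset.sum_congr rfl
          intro m _
          rw [Finset.mul_sum]
      _ = ∑ m ∈ range (n + 1), S2 n m * (if m = k then (k.factorial : ℝ) else 0) := by
          apply Finset.sum_congr rfl
          intro m _
          rw [key_sum]
  have hfac : (k.factorial : ℝ) ≠ 0 := by positivity
  constructor
  · intro hkn
    rw [hmain]
    rw [Finset.sum_eq_single k]
    · rw [if_pos rfl]
      field_simp
      try ring
    · intro m _ hm
      rw [if_neg hm, mul_zero]
    · intro h
      simp only [mem_range] at h
      omega
  · intro hnk
    rw [hmain]
    rw [Finset.sum_eq_zero, mul_zero]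
    intro m hm
    simp only [mem_range] at hm
    rw [if_neg (by omega), mul_zero]
end
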